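/- Fix a real α > 1 and let h : ℝ → ℝ be any function such that for every c > 1 one has 1 < h(c) < 1 + (c−1)/α and D(1/α ‖ (h(c)−1)/(c−1)) = ln(c)/α. Then h(c) tends to brute(α) = 1 + exp(−α·H(1/α)) as c → ∞. -/

import Mathlib

/-- Kullback–Leibler divergence `D(a‖b) = a·ln(a/b) + (1−a)·ln((1−a)/(1−b))`.
(The convention `0·ln 0 = 0` holds automatically since `Real.log 0 = 0`.) -/
noncomputable def klDiv (a b : ℝ) : ℝ :=
  a * Real.log (a / b) + (1 - a) * Real.log ((1 - a) / (1 - b))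

/-- Entropy function `H(p) = −p·ln p − (1−p)·ln(1−p)` (with `0·ln 0 = 0`). -/
noncomputable def entropy (p : ℝ) : ℝ :=
  -p * Real.log p - (1 - p) * Real.log (1 - p)

/-- `brute(α) = 1 + exp(−α·H(1/α))`. -/
noncomputable def brute (α : ℝ) : ℝ := 1 + Real.exp (-α * entropy (1 / α))

/-- Fix `α > 1` and let `h` satisfy for every `c > 1` that `1 < h(c) < 1 + (c−1)/α` and
`D(1/α ‖ (h(c)−1)/(c−1)) = ln(c)/α`. Then `h(c) → brute(α)` as `c → ∞`. -/
theorem stmt6 (α : ℝ) (hα : 1 < α) (h : ℝ → ℝ)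
    (hh : ∀ c : ℝ, 1 < c → (1 < h c ∧ h c < 1 + (c - 1) / α) ∧
      klDiv (1 / α) ((h c - 1) / (c - 1)) = Real.log c / α) :
    Filter.Tendsto h Filter.atTop (nhds (brute α)) := by
  have hα0 : 0 < α := by linarith
  set p : ℝ := 1 / α with hp
  have hp0 : 0 < p := by positivity
  have hp1 : p < 1 := by rw [hp, div_lt_one hα0]; exact hα
  have hap : α * p = 1 := by rw [hp]; field_simp
  set E : ℝ := Real.exp (-α * entropy p) with hE
  set x : ℝ → ℝ := fun c => (h c - 1) / (c - 1) with hxdef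
  have hxb : ∀ c, 1 < c → 0 < x c ∧ x c < p := by
    intro c hc
    obtain ⟨⟨h1, h2⟩, _⟩ := hh c hc
    have hc1 : (0:ℝ) < c - 1 := by linarith
    refine ⟨div_pos (by linarith) hc1, ?_⟩
    rw [hxdef]; simp only
    rw [div_lt_iff₀ hc1]
    have : p * (c - 1) = (c - 1) / α := by rw [hp]; ring
    linarith [this]
  -- key log identity
  have key : ∀ c, 1 < c → Real.log (x c) + Real.log c
      = -α * entropy p - (α - 1) * Real.log (1 - x c) := by
    intro c hc
    obtain ⟨hx0, hxp⟩ := hxb c hc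
    obtain ⟨_, heq⟩ := hh c hc
    have h1x : (0:ℝ) < 1 - x c := by linarith
    have h1p : (0:ℝ) < 1 - p := by linarith
    unfold klDiv at heq
    rw [Real.log_div (ne_of_gt hp0) (ne_of_gt hx0),
        Real.log_div (ne_of_gt h1p) (ne_of_gt h1x)] at heq
    unfold entropy
    linear_combination (-α) * heq + (Real.log (1 - x c) - Real.log (x c) - Real.log c) * hap
  -- multiplicative form
  have key2 : ∀ c, 1 < c →
      x c * c = E * Real.exp (-(α - 1) * Real.log (1 - x c)) := by
    intro c hc
    obtain ⟨hx0, _⟩ := hxb c hc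
    have hc0 : (0:ℝ) < c := lt_trans one_pos hc
    have hk := key c hc
    have h1 : x c * c = Real.exp (Real.log (x c) + Real.log c) := by
      rw [Real.exp_add, Real.exp_log hx0, Real.exp_log hc0]
    rw [h1, hk, hE, ← Real.exp_add]
    congr 1; ring
  -- bound x c ≤ M / c
  set M : ℝ := E * Real.exp (-(α - 1) * Real.log (1 - p)) with hM
  have hbound : ∀ c, 1 < c → x c ≤ M / c := by
    intro c hc
    obtain ⟨hx0, hxp⟩ := hxb c hc
    have hc0 : (0:ℝ) < c := lt_trans one_pos hc
    rw [le_div_iff₀ hc0, key2 c hc, hM]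
    have hE0 : 0 < E := Real.exp_pos _
    have hlog : Real.log (1 - p) ≤ Real.log (1 - x c) :=
      Real.log_le_log (by linarith) (by linarith)
    have : -(α - 1) * Real.log (1 - x c) ≤ -(α - 1) * Real.log (1 - p) := by
      have hα1 : (0:ℝ) ≤ α - 1 := by linarith
      nlinarith
    exact mul_le_mul_of_nonneg_left (Real.exp_le_exp.mpr this) (le_of_lt hE0)
  -- x tends to 0
  have hx0t : Filter.Tendsto x Filter.atTop (nhds 0) := by
    have hupper : Filter.Tendsto (fun c : ℝ => M / c) Filter.atTop (nhds 0) :=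
      Filter.Tendsto.div_atTop tendsto_const_nhds Filter.tendsto_id
    refine tendsto_of_tendsto_of_tendsto_of_le_of_le' tendsto_const_nhds hupper ?_ ?_
    · filter_upwards [Filter.eventually_gt_atTop (1:ℝ)] with c hc
      exact le_of_lt (hxb c hc).1
    · filter_upwards [Filter.eventually_gt_atTop (1:ℝ)] with c hc
      exact hbound c hc
  -- log(1 - x c) → 0
  have hlogt : Filter.Tendsto (fun c => Real.log (1 - x c)) Filter.atTop (nhds 0) := by
    have h1 : Filter.Tendsto (fun c => 1 - x c) Filter.atTop (nhds 1) := by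
      have h2 : Filter.Tendsto (fun c => (1:ℝ) - x c) Filter.atTop (nhds (1 - 0)) :=
        Filter.Tendsto.sub tendsto_const_nhds hx0t
      simpa using h2
    have hcont : Filter.Tendsto Real.log (nhds 1) (nhds 0) := by
      have := (Real.continuousAt_log (one_ne_zero)).tendsto
      simpa using this
    exact hcont.comp h1
  -- exp(-(α-1) * log(1-x c)) → 1
  have hexpt : Filter.Tendsto (fun c => Real.exp (-(α - 1) * Real.log (1 - x c)))
      Filter.atTop (nhds 1) := by
    have h1 : Filter.Tendsto (fun c => -(α - 1) * Real.log (1 - x c))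
        Filter.atTop (nhds 0) := by
      have := hlogt.const_mul (-(α - 1))
      simpa using this
    have := (Real.continuous_exp.tendsto 0).comp h1
    simpa [Function.comp_def] using this
  -- x c * c → E
  have hxc : Filter.Tendsto (fun c => x c * c) Filter.atTop (nhds E) := by
    have h1 : Filter.Tendsto (fun c => E * Real.exp (-(α - 1) * Real.log (1 - x c)))
        Filter.atTop (nhds E) := by
      have := hexpt.const_mul E
      simpa using this
    refine h1.congr' ?_
    filter_upwards [Filter.eventually_gt_atTop (1:ℝ)] with c hc
    exact (key2 c hc).symm
  -- conclude
  have hfinal : Filter.Tendsto (fun c => 1 + (x c * c - x c)) Filter.atTop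
      (nhds (brute α)) := by
    have : Filter.Tendsto (fun c => 1 + (x c * c - x c)) Filter.atTop
        (nhds (1 + (E - 0))) := tendsto_const_nhds.add (hxc.sub hx0t)
    simpa [brute, hE, hp] using this
  refine hfinal.congr' ?_
  filter_upwards [Filter.eventually_gt_atTop (1:ℝ)] with c hc
  have hc1 : (c:ℝ) - 1 ≠ 0 := by linarith
  have : x c * (c - 1) = h c - 1 := by
    rw [hxdef]; field_simp
  linarith [this]
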